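/- arXiv:1705.08859 — 6 statements merged into one kernel-verified Lean document; each statement's English description precedes it below -/
import Mathlib

section
/- Suppose a graph G with transition matrix H(t) admits pretty good state transfer from vertex u to vertex v, i.e., there is a real sequence {t_k} and a unimodular complex number γ with lim_{k→∞} H(t_k)e_u = γ e_v. If P is the permutation matrix of an automorphism of G with P e_u = e_u, then P e_v = e_v. -/
open Matrix Complex Filter Finset

/-- If G admits pretty good state transfer from u to v and P is the permutation matrix
of an automorphism of G fixing e_u, then P fixes e_v. -/
theorem stmt4 {V : Type*} [Fintype V] [DecidableEq V] (G : SimpleGraph V)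
    [DecidableRel G.Adj] (σ : G ≃g G) (u v : V) (t : ℕ → ℝ) (γ : ℂ) (hγ : ‖γ‖ = 1)
    (hpgst : Tendsto
      (fun k => (NormedSpace.exp ((-(t k : ℂ) * Complex.I) • G.adjMatrix ℂ)).mulVec
        (Pi.single u 1 : V → ℂ))
      atTop (nhds (γ • (Pi.single v 1 : V → ℂ))))
    (hu : (Equiv.Perm.permMatrix ℂ (σ.toEquiv : Equiv.Perm V)).mulVec
        (Pi.single u 1 : V → ℂ) = (Pi.single u 1 : V → ℂ)) :
    (Equiv.Perm.permMatrix ℂ (σ.toEquiv : Equiv.Perm V)).mulVec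
      (Pi.single v 1 : V → ℂ) = (Pi.single v 1 : V → ℂ) := by
  set P : Matrix V V ℂ := Equiv.Perm.permMatrix ℂ (σ.toEquiv : Equiv.Perm V) with hP
  set A : Matrix V V ℂ := G.adjMatrix ℂ with hA
  have hcomm : Commute P A := by
    unfold Commute SemiconjBy
    rw [hP, hA, Equiv.Perm.permMatrix, PEquiv.toMatrix_toPEquiv_mul,
      PEquiv.mul_toMatrix_toPEquiv]
    ext i j
    simp only [submatrix_apply, id_eq, SimpleGraph.adjMatrix_apply]
    congr 1
    simp only [eq_iff_iff]
    conv_lhs => rw [show j = σ (σ.symm j) from (σ.toEquiv.apply_symm_apply j).symm]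
    exact σ.map_rel_iff
  have hcommE : ∀ k : ℕ, Commute P (NormedSpace.exp ((-(t k : ℂ) * Complex.I) • A)) :=
    fun k => (hcomm.smul_right _).exp_right
  -- apply continuous linear map P.mulVec to the limit
  have hcont : Continuous (P.mulVecLin : (V → ℂ) →ₗ[ℂ] (V → ℂ)) :=
    LinearMap.continuous_of_finiteDimensional _
  have h2 : Tendsto
      (fun k => P.mulVec ((NormedSpace.exp ((-(t k : ℂ) * Complex.I) • A)).mulVec
        (Pi.single u 1 : V → ℂ)))
      atTop (nhds (P.mulVec (γ • (Pi.single v 1 : V → ℂ)))) :=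
    (hcont.tendsto _).comp hpgst
  have h3 : (fun k => P.mulVec ((NormedSpace.exp ((-(t k : ℂ) * Complex.I) • A)).mulVec
        (Pi.single u 1 : V → ℂ)))
      = fun k => (NormedSpace.exp ((-(t k : ℂ) * Complex.I) • A)).mulVec
        (Pi.single u 1 : V → ℂ) := by
    funext k
    rw [Matrix.mulVec_mulVec, (hcommE k).eq, ← Matrix.mulVec_mulVec, hu]
  rw [h3] at h2
  have h4 : P.mulVec (γ • (Pi.single v 1 : V → ℂ)) = γ • (Pi.single v 1 : V → ℂ) :=
    tendsto_nhds_unique h2 hpgst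
  have hγ0 : γ ≠ 0 := by
    intro h; rw [h] at hγ; simp at hγ
  rw [Matrix.mulVec_smul] at h4
  exact smul_right_injective _ hγ0 h4
end

section
/- If the circulant graph Cay(Z_n, S) exhibits pretty good state transfer between some pair of distinct vertices, then n is even, and PGST occurs only between pairs of vertices of the form u and u + n/2 (mod n). -/
open Matrix Complex Filter Finset

/-- Adjacency matrix of the circulant graph Cay(Z_n, S). -/
noncomputable def cayAdj (n : ℕ) [NeZero n] (S : Finset (ZMod n)) : Matrix (ZMod n) (ZMod n) ℂ :=
  fun a b => if a - b ∈ S then 1 else 0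

/-- Transition matrix H(t) = exp(-itA) of Cay(Z_n, S). -/
noncomputable def transM (n : ℕ) [NeZero n] (S : Finset (ZMod n)) (t : ℝ) :
    Matrix (ZMod n) (ZMod n) ℂ :=
  NormedSpace.exp ((-(t : ℂ) * Complex.I) • cayAdj n S)
/-- `exp` commutes with reindexing of square matrices by an equivalence. -/
lemma exp_submatrix {m : Type*} [Fintype m] [DecidableEq m] (σ : m ≃ m)
    (M : Matrix m m ℂ) :
    (NormedSpace.exp M).submatrix σ σ = NormedSpace.exp (M.submatrix σ σ) := by
  letI : SeminormedRing (Matrix m m ℂ) := Matrix.linftyOpSemiNormedRing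
  letI : NormedRing (Matrix m m ℂ) := Matrix.linftyOpNormedRing
  letI : NormedAlgebra ℂ (Matrix m m ℂ) := Matrix.linftyOpNormedAlgebra
  letI : NormedAlgebra ℚ (Matrix m m ℂ) := NormedAlgebra.restrictScalars ℚ ℂ _
  have hcont : Continuous (Matrix.reindexAlgEquiv ℂ ℂ σ.symm) :=
    (Matrix.reindexAlgEquiv ℂ ℂ σ.symm).toLinearMap.continuous_of_finiteDimensional
  have h := NormedSpace.map_exp
    ((Matrix.reindexAlgEquiv ℂ ℂ σ.symm : Matrix m m ℂ ≃ₐ[ℂ] Matrix m m ℂ) :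
      Matrix m m ℂ →+* Matrix m m ℂ) hcont M
  simp [Matrix.reindexAlgEquiv_apply, Matrix.reindex_apply] at h
  exact h

/-- If Cay(Z_n, S) exhibits pretty good state transfer between distinct vertices u and v,
then n is even and v = u + n/2. -/
theorem stmt5 (n : ℕ) [NeZero n] (S : Finset (ZMod n)) (h0 : (0 : ZMod n) ∉ S)
    (hsym : ∀ s ∈ S, -s ∈ S) (u v : ZMod n) (huv : u ≠ v) (t : ℕ → ℝ) (γ : ℂ)
    (hγ : ‖γ‖ = 1)
    (hpgst : Tendsto (fun k => (transM n S (t k)).mulVec (Pi.single u 1 : ZMod n → ℂ))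
      atTop (nhds (γ • (Pi.single v 1 : ZMod n → ℂ)))) :
    2 ∣ n ∧ v = u + ((n / 2 : ℕ) : ZMod n) := by
  classical
  set σ : ZMod n ≃ ZMod n := Equiv.subLeft (u + u) with hσ
  have hσu : σ u = u := by simp [hσ, Equiv.subLeft]
  -- the adjacency matrix is invariant under reindexing by σ
  have hA : (cayAdj n S).submatrix σ σ = cayAdj n S := by
    ext a b
    have hdiff : σ a - σ b = -(a - b) := by
      simp only [hσ, Equiv.subLeft_apply]
      ring
    simp only [Matrix.submatrix_apply, cayAdj, hdiff]
    congr 1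
    simp only [eq_iff_iff]
    constructor
    · intro h; simpa using hsym _ h
    · intro h; exact hsym _ h
  -- hence so is the transition matrix
  have hH : ∀ s : ℝ, (transM n S s).submatrix σ σ = transM n S s := by
    intro s
    have hA' : ∀ a b, cayAdj n S (σ a) (σ b) = cayAdj n S a b := fun a b =>
      congrFun (congrFun hA a) b
    rw [transM, exp_submatrix]
    congr 1
    ext a b
    simp [Matrix.submatrix_apply, Matrix.smul_apply, hA']
  -- coordinatewise convergence
  have hcoord : ∀ a : ZMod n, Tendsto (fun k => transM n S (t k) a u) atTop
      (nhds ((γ • (Pi.single v 1 : ZMod n → ℂ)) a)) := by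
    intro a
    have h := tendsto_pi_nhds.mp hpgst a
    simpa [Matrix.mulVec_single] using h
  have h1 := hcoord v
  have h2 := hcoord (σ v)
  have heq : (fun k => transM n S (t k) (σ v) u) = fun k => transM n S (t k) v u := by
    funext k
    have := congrFun (congrFun (hH (t k)) v) u
    simpa [Matrix.submatrix_apply, hσu] using this
  rw [heq] at h2
  have hlim : (γ • (Pi.single v 1 : ZMod n → ℂ)) (σ v)
      = (γ • (Pi.single v 1 : ZMod n → ℂ)) v := tendsto_nhds_unique h2 h1
  have hσv : σ v = v := by
    by_contra hne
    have : (γ • (Pi.single v 1 : ZMod n → ℂ)) (σ v) = 0 := by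
      simp [Pi.single_eq_of_ne hne]
    rw [this] at hlim
    have : γ = 0 := by simpa using hlim.symm
    rw [this] at hγ; simp at hγ
  -- from σ v = v we get 2 * (v - u) = 0
  have hdd : 2 * (v - u) = 0 := by
    have : (u + u) - v = v := hσv
    linear_combination -this
  set d : ZMod n := v - u with hd
  have hdne : d ≠ 0 := sub_ne_zero.mpr (Ne.symm huv)
  have hvalne : d.val ≠ 0 := fun h => hdne ((ZMod.val_eq_zero d).mp h)
  have hvallt : d.val < n := ZMod.val_lt d
  have hcast : ((2 * d.val : ℕ) : ZMod n) = 0 := by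
    push_cast
    rw [ZMod.natCast_val, ZMod.cast_id]
    exact hdd
  have hdvd : n ∣ 2 * d.val := (ZMod.natCast_eq_zero_iff _ _).mp hcast
  obtain ⟨c, hc⟩ := hdvd
  have hn0 : 0 < n := Nat.pos_of_ne_zero (NeZero.ne n)
  have hc1 : c = 1 := by
    rcases c with _ | c
    · rw [Nat.mul_zero] at hc; omega
    rcases c with _ | c
    · rfl
    · exfalso
      have h2 : n * 2 ≤ n * (c + 2) := Nat.mul_le_mul_left n (by omega)
      rw [← hc] at h2
      omega
  rw [hc1, Nat.mul_one] at hc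
  have hn : n = 2 * d.val := by omega
  refine ⟨⟨d.val, hn⟩, ?_⟩
  have hhalf : n / 2 = d.val := by omega
  rw [hhalf, ZMod.natCast_val, ZMod.cast_id, hd]
  ring
end

section
/- Let 2 ≤ k' < k. If the cycle C_{2^k} admits pretty good state transfer (between 0 and 2^{k-1}) with respect to a real sequence {t_m}, then the cycle C_{2^{k'}} is almost periodic with respect to some subsequence of {t_m}, i.e., there is a subsequence {t'_m} and unimodular γ with lim_{m→∞} H'(t'_m) = γ I, where H' is the transition matrix of C_{2^{k'}}. -/
open Matrix Complex Filter Finset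

namespace Stmt8Aux

noncomputable def cc (N : ℕ) (j : ℕ) : ℂ := Complex.exp (2 * Real.pi * Complex.I * j / N)

lemma cc_zero (N : ℕ) : cc N 0 = 1 := by simp [cc]

lemma cc_add (N a b : ℕ) : cc N (a + b) = cc N a * cc N b := by
  rw [cc, cc, cc, ← Complex.exp_add]
  congr 1
  push_cast
  ring

lemma cc_nat_mul (N q : ℕ) (hN : N ≠ 0) : cc N (N * q) = 1 := by
  have hNc : (N : ℂ) ≠ 0 := Nat.cast_ne_zero.mpr hN
  have h : (2 * (Real.pi:ℂ) * Complex.I * ((N * q : ℕ) : ℂ) / N) = (q : ℕ) * (2 * (Real.pi:ℂ) * Complex.I) := by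
    push_cast
    field_simp
  rw [cc, h]
  exact Complex.exp_nat_mul_two_pi_mul_I q

lemma cc_mod (N a : ℕ) (hN : N ≠ 0) : cc N (a % N) = cc N a := by
  conv_rhs => rw [← Nat.div_add_mod a N]
  rw [cc_add, cc_nat_mul _ _ hN, one_mul]

lemma cc_pow (N a m : ℕ) : cc N a ^ m = cc N (a * m) := by
  rw [cc, cc, ← Complex.exp_nat_mul]
  congr 1
  push_cast
  ring

noncomputable def chi (N : ℕ) [NeZero N] (x : ZMod N) : ℂ := cc N x.val

lemma chi_natCast (N : ℕ) [NeZero N] (j : ℕ) : chi N (j : ZMod N) = cc N j := by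
  rw [chi, ZMod.val_natCast, cc_mod _ _ (NeZero.ne N)]

lemma chi_add (N : ℕ) [NeZero N] (x y : ZMod N) : chi N (x + y) = chi N x * chi N y := by
  rw [chi, ZMod.val_add, cc_mod _ _ (NeZero.ne N), cc_add, chi, chi]

lemma chi_zero (N : ℕ) [NeZero N] : chi N 0 = 1 := by
  rw [chi, ZMod.val_zero, cc_zero]

lemma chi_ne_zero (N : ℕ) [NeZero N] (x : ZMod N) : chi N x ≠ 0 := Complex.exp_ne_zero _

lemma chi_mul_chi_neg (N : ℕ) [NeZero N] (x : ZMod N) : chi N x * chi N (-x) = 1 := by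
  rw [← chi_add]; simp [chi_zero]

lemma chi_mul_eq_pow (N : ℕ) [NeZero N] (l x : ZMod N) :
    chi N (l * x) = chi N x ^ l.val := by
  rw [chi, ZMod.val_mul, cc_mod _ _ (NeZero.ne N), chi, cc_pow]
  congr 1
  ring

lemma chi_pow_card (N : ℕ) [NeZero N] (x : ZMod N) : chi N x ^ N = 1 := by
  rw [chi, cc_pow, mul_comm, cc_nat_mul _ _ (NeZero.ne N)]

lemma chi_ne_one (N : ℕ) [NeZero N] {x : ZMod N} (hx : x ≠ 0) : chi N x ≠ 1 := by
  intro h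
  apply hx
  rw [chi, cc] at h
  obtain ⟨m, hm⟩ := Complex.exp_eq_one_iff.mp h
  have hNc : (N : ℂ) ≠ 0 := Nat.cast_ne_zero.mpr (NeZero.ne N)
  have hπ : (Real.pi : ℂ) ≠ 0 := Complex.ofReal_ne_zero.mpr Real.pi_ne_zero
  have hI := Complex.I_ne_zero
  have h2 : (2 * (Real.pi:ℂ) * Complex.I) ≠ 0 := by
    simp [hπ, hI]
  have key : (x.val : ℂ) = (m : ℂ) * N := by
    rw [div_eq_iff hNc] at hm
    apply mul_left_cancel₀ h2
    linear_combination hm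
  have keyZ : (x.val : ℤ) = m * N := by exact_mod_cast key
  have h1 : (x.val : ℤ) < N := by exact_mod_cast x.val_lt
  have h0 : (0 : ℤ) ≤ (x.val : ℤ) := by positivity
  have hNpos : (0 : ℤ) < N := by exact_mod_cast Nat.pos_of_ne_zero (NeZero.ne N)
  have hm0 : m = 0 := by
    by_contra hne
    rcases lt_or_gt_of_ne hne with hlt | hgt
    · have h4 : m + 1 ≤ 0 := by omega
      have h5 : (m + 1) * (N:ℤ) ≤ 0 := mul_nonpos_of_nonpos_of_nonneg h4 (le_of_lt hNpos)
      have h6 : (m + 1) * (N:ℤ) = m * N + N := by ring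
      linarith
    · have h4 : 1 ≤ m := hgt
      have h5 : (0:ℤ) ≤ (m - 1) * N := mul_nonneg (by omega) (le_of_lt hNpos)
      have h6 : (m - 1) * (N:ℤ) = m * N - N := by ring
      linarith
  rw [hm0] at keyZ
  simp only [zero_mul] at keyZ
  have : x.val = 0 := by exact_mod_cast keyZ
  rwa [← ZMod.val_eq_zero]

lemma sum_chi (N : ℕ) [NeZero N] (x : ZMod N) :
    ∑ l : ZMod N, chi N (l * x) = if x = 0 then (N : ℂ) else 0 := by
  split_ifs with h
  · subst h
    simp [chi_zero, Finset.card_univ, ZMod.card]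
  · have hx1 : chi N x ≠ 1 := chi_ne_one N h
    have hre : ∑ l : ZMod N, chi N (l * x) = ∑ i ∈ Finset.range N, chi N x ^ i := by
      simp_rw [chi_mul_eq_pow]
      refine Finset.sum_nbij' (fun l => l.val) (fun i => (i : ZMod N)) ?_ ?_ ?_ ?_ ?_
      · intro l _; exact Finset.mem_range.mpr l.val_lt
      · intro i _; exact Finset.mem_univ _
      · intro l _; exact ZMod.natCast_rightInverse l
      · intro i hi; exact ZMod.val_cast_of_lt (Finset.mem_range.mp hi)
      · intro l _; rfl
    rw [hre, geom_sum_eq hx1, chi_pow_card, sub_self, zero_div]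

/-- eigenvector property of the cycle adjacency matrix -/
lemma adj_mulVec (N : ℕ) [NeZero N] (hN : 3 ≤ N) (l : ZMod N) :
    cayAdj N {1, -1} *ᵥ (fun a => chi N (l * a)) =
      (chi N l + chi N (-l)) • fun a => chi N (l * a) := by
  have h2 : ((2 : ℕ) : ZMod N) ≠ 0 := by
    rw [Ne, ZMod.natCast_eq_zero_iff]
    intro h
    have := Nat.le_of_dvd (by norm_num) h
    omega
  funext a
  have hne : (a - 1 : ZMod N) ≠ a + 1 := by
    intro h
    apply h2
    push_cast
    linear_combination -h
  have hmem : ∀ b : ZMod N, (a - b ∈ ({1, -1} : Finset (ZMod N))) ↔ (b = a - 1 ∨ b = a + 1) := by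
    intro b
    simp only [Finset.mem_insert, Finset.mem_singleton]
    constructor
    · rintro (h | h)
      · left; linear_combination -h
      · right; linear_combination -h
    · rintro (h | h)
      · left; linear_combination -h
      · right; linear_combination -h
  have key : (cayAdj N {1, -1} *ᵥ fun a => chi N (l * a)) a
      = chi N (l * (a - 1)) + chi N (l * (a + 1)) := by
    show (∑ b : ZMod N, (if a - b ∈ ({1, -1} : Finset (ZMod N)) then (1:ℂ) else 0) * chi N (l * b)) = _
    have : ∀ b : ZMod N,
        (if a - b ∈ ({1, -1} : Finset (ZMod N)) then (1:ℂ) else 0) * chi N (l * b)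
        = (if b = a - 1 then chi N (l * b) else 0) + (if b = a + 1 then chi N (l * b) else 0) := by
      intro b
      by_cases h1 : b = a - 1 <;> by_cases h2' : b = a + 1 <;>
        simp [hmem, h1, h2', hne] <;> aesop
    rw [Finset.sum_congr rfl fun b _ => this b, Finset.sum_add_distrib,
      Finset.sum_ite_eq' Finset.univ (a - 1), Finset.sum_ite_eq' Finset.univ (a + 1)]
    simp
  rw [key]
  have e1 : l * (a - 1) = l * a + (-l) := by ring
  have e2 : l * (a + 1) = l * a + l := by ring
  rw [e1, e2, chi_add, chi_add]
  simp only [Pi.smul_apply, smul_eq_mul]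
  ring

lemma cayAdj_transpose (N : ℕ) [NeZero N] : (cayAdj N {1, -1})ᵀ = cayAdj N {1, -1} := by
  funext a b
  simp only [Matrix.transpose_apply, cayAdj]
  congr 1
  simp only [Finset.mem_insert, Finset.mem_singleton, eq_iff_iff]
  constructor
  · rintro (h | h)
    · right; linear_combination -h
    · left; linear_combination -h
  · rintro (h | h)
    · right; linear_combination -h
    · left; linear_combination -h

lemma transM_transpose (N : ℕ) [NeZero N] (t : ℝ) :
    (transM N {1, -1} t)ᵀ = transM N {1, -1} t := by
  rw [transM, ← Matrix.exp_transpose, Matrix.transpose_smul, cayAdj_transpose]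

/-- exponential acting on an eigenvector -/
lemma transM_mulVec (N : ℕ) [NeZero N] (S : Finset (ZMod N)) (t : ℝ) (v : ZMod N → ℂ) (μ : ℂ)
    (hv : cayAdj N S *ᵥ v = μ • v) :
    transM N S t *ᵥ v = Complex.exp (-(t : ℂ) * Complex.I * μ) • v := by
  set c : ℂ := -(t : ℂ) * Complex.I with hc
  set M := cayAdj N S with hM
  have hpow : ∀ j : ℕ, (c • M) ^ j *ᵥ v = (c * μ) ^ j • v := by
    intro j
    induction j with
    | zero => simp [Matrix.one_mulVec]
    | succ j ih =>
      rw [pow_succ, ← Matrix.mulVec_mulVec, Matrix.smul_mulVec, hv, Matrix.mulVec_smul,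
        Matrix.mulVec_smul, ih, pow_succ, smul_smul, smul_smul]
      congr 1
      ring
  letI : NormedRing (Matrix (ZMod N) (ZMod N) ℂ) := Matrix.linftyOpNormedRing
  letI : NormedAlgebra ℂ (Matrix (ZMod N) (ZMod N) ℂ) := Matrix.linftyOpNormedAlgebra
  have hsum : Summable fun j : ℕ => (j.factorial : ℂ)⁻¹ • (c • M) ^ j :=
    NormedSpace.expSeries_summable' (𝕂 := ℂ) (c • M)
  let L : Matrix (ZMod N) (ZMod N) ℂ →ₗ[ℂ] (ZMod N → ℂ) :=
    { toFun := fun X => X *ᵥ v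
      map_add' := fun X Y => Matrix.add_mulVec X Y v
      map_smul' := fun r X => Matrix.smul_mulVec r X v }
  let Lc : Matrix (ZMod N) (ZMod N) ℂ →L[ℂ] (ZMod N → ℂ) :=
    { L with cont := L.continuous_of_finiteDimensional }
  have hsum2 : Summable fun j : ℕ => (j.factorial : ℂ)⁻¹ • (c * μ) ^ j :=
    NormedSpace.expSeries_summable' (𝕂 := ℂ) (c * μ)
  calc transM N S t *ᵥ v = Lc (NormedSpace.exp (c • M)) := rfl
    _ = Lc (∑' j : ℕ, (j.factorial : ℂ)⁻¹ • (c • M) ^ j) := by rw [NormedSpace.exp_eq_tsum ℂ]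
    _ = ∑' j : ℕ, Lc ((j.factorial : ℂ)⁻¹ • (c • M) ^ j) := Lc.map_tsum hsum
    _ = ∑' j : ℕ, ((j.factorial : ℂ)⁻¹ • (c * μ) ^ j) • v := by
        refine tsum_congr fun j => ?_
        rw [_root_.map_smul]
        show (j.factorial : ℂ)⁻¹ • ((c • M) ^ j *ᵥ v) = _
        rw [hpow j, smul_smul, smul_eq_mul]
    _ = (∑' j : ℕ, (j.factorial : ℂ)⁻¹ • (c * μ) ^ j) • v := hsum2.tsum_smul_const v
    _ = Complex.exp (c * μ) • v := by
        rw [Complex.exp_eq_exp_ℂ, NormedSpace.exp_eq_tsum ℂ]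


end Stmt8Aux

open Stmt8Aux


/-- If C_{2^k} admits PGST (between 0 and 2^{k-1}) with respect to a sequence {t_m},
then C_{2^{k'}} (2 ≤ k' < k) is almost periodic with respect to a subsequence. -/
theorem stmt8 (k k' : ℕ) (hk' : 2 ≤ k') (hkk : k' < k)
    (n n' : ℕ) [NeZero n] [NeZero n'] (hn : n = 2 ^ k) (hn' : n' = 2 ^ k')
    (t : ℕ → ℝ) (γ : ℂ) (hγ : ‖γ‖ = 1)
    (hpgst : Tendsto (fun m => (transM n {1, -1} (t m)).mulVec (Pi.single 0 1 : ZMod n → ℂ))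
      atTop (nhds (γ • (Pi.single ((2 ^ (k - 1) : ℕ) : ZMod n) 1 : ZMod n → ℂ)))) :
    ∃ φ : ℕ → ℕ, StrictMono φ ∧ ∃ δ : ℂ, ‖δ‖ = 1 ∧
      Tendsto (fun m => transM n' {1, -1} (t (φ m))) atTop
        (nhds (δ • (1 : Matrix (ZMod n') (ZMod n') ℂ))) := by
  have hn3 : 3 ≤ n := by
    have : 2 ^ 3 ≤ 2 ^ k := Nat.pow_le_pow_right (by norm_num) (by omega)
    omega
  have hn'3 : 3 ≤ n' := by
    have : 2 ^ 2 ≤ 2 ^ k' := Nat.pow_le_pow_right (by norm_num) (by omega)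
    omega
  set c0 : ZMod n := ((2 ^ (k - 1) : ℕ) : ZMod n) with hc0
  -- Step 1: phases converge
  have step1 : ∀ l : ZMod n,
      Tendsto (fun m => Complex.exp (-(t m : ℂ) * Complex.I * (chi n l + chi n (-l))))
        atTop (nhds (γ * chi n (l * c0))) := by
    intro l
    set v : ZMod n → ℂ := fun a => chi n (l * a) with hvdef
    have hv : cayAdj n {1, -1} *ᵥ v = (chi n l + chi n (-l)) • v := adj_mulVec n hn3 l
    have hdot : ∀ m : ℕ, v ⬝ᵥ (transM n {1, -1} (t m) *ᵥ (Pi.single 0 1 : ZMod n → ℂ))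
        = Complex.exp (-(t m : ℂ) * Complex.I * (chi n l + chi n (-l))) := by
      intro m
      rw [Matrix.dotProduct_mulVec]
      have hvm : v ᵥ* transM n {1, -1} (t m) = transM n {1, -1} (t m) *ᵥ v := by
        conv_lhs => rw [← transM_transpose n (t m)]
        rw [Matrix.vecMul_transpose]
      rw [hvm, transM_mulVec n _ _ v _ hv, smul_dotProduct, dotProduct_single]
      have : v 0 = 1 := by rw [hvdef]; show chi n (l * 0) = 1; rw [mul_zero, chi_zero]
      rw [this, one_mul, smul_eq_mul, mul_one]
    have hlim : v ⬝ᵥ (γ • (Pi.single c0 1 : ZMod n → ℂ)) = γ * chi n (l * c0) := by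
      rw [dotProduct_smul, dotProduct_single, smul_eq_mul, mul_one]
    have hcont : Tendsto (fun m => v ⬝ᵥ (transM n {1, -1} (t m) *ᵥ (Pi.single 0 1 : ZMod n → ℂ)))
        atTop (nhds (v ⬝ᵥ (γ • (Pi.single c0 1 : ZMod n → ℂ)))) := by
      simp only [dotProduct]
      exact tendsto_finset_sum _ fun a _ => ((tendsto_pi_nhds.mp hpgst a).const_mul (v a))
    rw [hlim] at hcont
    simp only [hdot] at hcont
    exact hcont
  -- Step 2: phases of the smaller cycle converge to γ
  have step2 : ∀ l' : ZMod n',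
      Tendsto (fun m => Complex.exp (-(t m : ℂ) * Complex.I * (chi n' l' + chi n' (-l'))))
        atTop (nhds γ) := by
    intro l'
    set l : ZMod n := ((2 ^ (k - k') * l'.val : ℕ) : ZMod n) with hl
    have hnn : (n : ℂ) = (n' : ℂ) * 2 ^ (k - k') := by
      rw [hn, hn']
      push_cast
      rw [← pow_add]
      congr 1
      omega
    have h1 : chi n l = chi n' l' := by
      rw [hl, chi_natCast]
      show cc n _ = cc n' l'.val
      unfold cc
      congr 1
      have h2 : ((2 : ℂ) ^ (k - k')) ≠ 0 := pow_ne_zero _ two_ne_zero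
      have hne' : (n' : ℂ) ≠ 0 := Nat.cast_ne_zero.mpr (NeZero.ne n')
      rw [hnn]
      push_cast
      field_simp
    have h2 : chi n (-l) = chi n' (-l') := by
      apply mul_left_cancel₀ (chi_ne_zero n' l')
      rw [chi_mul_chi_neg n' l', ← h1, chi_mul_chi_neg n l]
    have h3 : chi n (l * c0) = 1 := by
      have hcast : l * c0 = ((2 ^ (k - k') * l'.val * 2 ^ (k - 1) : ℕ) : ZMod n) := by
        rw [hl, hc0]
        push_cast
        ring
      rw [hcast, chi_natCast]
      have hexp : 2 ^ (k - k') * l'.val * 2 ^ (k - 1) = n * (2 ^ (k - k' - 1) * l'.val) := by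
        have e : (k - k') + (k - 1) = k + (k - k' - 1) := by omega
        calc 2 ^ (k - k') * l'.val * 2 ^ (k - 1)
            = 2 ^ ((k - k') + (k - 1)) * l'.val := by rw [pow_add]; ring
          _ = 2 ^ (k + (k - k' - 1)) * l'.val := by rw [e]
          _ = n * (2 ^ (k - k' - 1) * l'.val) := by rw [hn, pow_add]; ring
      rw [hexp, cc_nat_mul _ _ (NeZero.ne n)]
    have h := step1 l
    rw [h1, h2, h3, mul_one] at h
    exact h
  -- Step 3: spectral formula for the small transition matrix
  have hn'0 : (n' : ℂ) ≠ 0 := Nat.cast_ne_zero.mpr (NeZero.ne n')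
  set W : ZMod n' → Matrix (ZMod n') (ZMod n') ℂ :=
    fun l' => Matrix.of fun a b => chi n' (l' * a) * chi n' (l' * (-b)) with hW
  have hsingle : ∀ b : ZMod n', (Pi.single b 1 : ZMod n' → ℂ)
      = (n' : ℂ)⁻¹ • ∑ l' : ZMod n', chi n' (l' * (-b)) • (fun a => chi n' (l' * a)) := by
    intro b
    funext a
    simp only [Pi.smul_apply, Finset.sum_apply, smul_eq_mul]
    have hterm : ∀ l' : ZMod n', chi n' (l' * (-b)) * chi n' (l' * a) = chi n' (l' * (a - b)) := by
      intro l'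
      rw [← chi_add]
      congr 1
      ring
    rw [Finset.sum_congr rfl fun l' _ => hterm l', sum_chi]
    rcases eq_or_ne a b with hab | hab
    · subst hab
      rw [if_pos (sub_self a), Pi.single_eq_same, inv_mul_cancel₀ hn'0]
    · rw [if_neg (sub_ne_zero_of_ne hab), Pi.single_eq_of_ne hab, mul_zero]
  have key : ∀ s : ℝ, transM n' {1, -1} s
      = (n' : ℂ)⁻¹ • ∑ l' : ZMod n',
          Complex.exp (-(s : ℂ) * Complex.I * (chi n' l' + chi n' (-l'))) • W l' := by
    intro s
    have hvec : ∀ b : ZMod n', transM n' {1, -1} s *ᵥ (Pi.single b 1 : ZMod n' → ℂ)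
        = (n' : ℂ)⁻¹ • ∑ l' : ZMod n',
            (chi n' (l' * (-b)) * Complex.exp (-(s : ℂ) * Complex.I * (chi n' l' + chi n' (-l'))))
              • (fun a => chi n' (l' * a)) := by
      intro b
      rw [hsingle b, Matrix.mulVec_smul]
      congr 1
      have hms : transM n' {1, -1} s *ᵥ (∑ l' : ZMod n', chi n' (l' * (-b)) • (fun a => chi n' (l' * a)))
          = ∑ l' : ZMod n', transM n' {1, -1} s *ᵥ (chi n' (l' * (-b)) • (fun a => chi n' (l' * a))) := by
        exact map_sum (Matrix.mulVecLin (transM n' {1, -1} s))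
          (fun l' : ZMod n' => chi n' (l' * (-b)) • (fun a => chi n' (l' * a))) Finset.univ
      rw [hms]
      refine Finset.sum_congr rfl fun l' _ => ?_
      rw [Matrix.mulVec_smul,
        transM_mulVec n' _ _ _ _ (adj_mulVec n' hn'3 l'), smul_smul]
    funext a b
    have hentry : transM n' {1, -1} s a b
        = (transM n' {1, -1} s *ᵥ (Pi.single b 1 : ZMod n' → ℂ)) a := by
      rw [Matrix.mulVec_single]
      simp
    rw [hentry, hvec b]
    simp only [Matrix.smul_apply, Matrix.sum_apply, Pi.smul_apply, Finset.sum_apply,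
      smul_eq_mul, hW, Matrix.of_apply]
    congr 1
    refine Finset.sum_congr rfl fun l' _ => ?_
    ring
  -- conclusion
  have h2 : (n' : ℂ)⁻¹ • ∑ l' : ZMod n', γ • W l' = γ • (1 : Matrix (ZMod n') (ZMod n') ℂ) := by
    funext a b
    simp only [Matrix.smul_apply, Matrix.sum_apply, smul_eq_mul, hW, Matrix.of_apply,
      Matrix.one_apply]
    have hterm : ∀ l' : ZMod n', γ * (chi n' (l' * a) * chi n' (l' * (-b)))
        = γ * chi n' (l' * (a - b)) := by
      intro l'
      rw [show l' * (a - b) = l' * a + l' * (-b) by ring, chi_add]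
    rw [Finset.sum_congr rfl fun l' _ => hterm l', ← Finset.mul_sum, sum_chi]
    rcases eq_or_ne a b with hab | hab
    · subst hab
      rw [if_pos (sub_self a), if_pos rfl]
      field_simp
    · rw [if_neg (sub_ne_zero_of_ne hab), if_neg hab]
      ring
  refine ⟨id, strictMono_id, γ, hγ, ?_⟩
  have h1 : Tendsto (fun m => (n' : ℂ)⁻¹ • ∑ l' : ZMod n',
      Complex.exp (-(t m : ℂ) * Complex.I * (chi n' l' + chi n' (-l'))) • W l') atTop
      (nhds ((n' : ℂ)⁻¹ • ∑ l' : ZMod n', γ • W l')) :=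
    (tendsto_finset_sum _ fun l' _ => (step2 l').smul_const (W l')).const_smul _
  rw [h2] at h1
  simp only [key, id]
  exact h1
end

section
/- A circulant graph Cay(Z_n, S) is integral (all eigenvalues of its adjacency matrix are integers) if and only if S is a gcd-set, i.e., S is a union of sets S_n(d) = { x ∈ Z_n : gcd(x,n) = d } over some set D of proper divisors d of n. -/
open Matrix Complex Filter Finset

/-- The set S_n(d) = { x ∈ Z_n : gcd(x, n) = d }. -/
def gcdSet (n : ℕ) [NeZero n] (d : ℕ) : Finset (ZMod n) :=
  Finset.univ.filter (fun x : ZMod n => Nat.gcd x.val n = d)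

lemma aux_gcd_mod {A n : ℕ} : Nat.gcd (A % n) n = Nat.gcd A n := by
  rw [← Nat.gcd_rec, Nat.gcd_comm]

lemma aux_gcd_unit_mul {n : ℕ} [NeZero n] (u : (ZMod n)ˣ) (x : ZMod n) :
    Nat.gcd ((u : ZMod n) * x).val n = Nat.gcd x.val n := by
  rw [ZMod.val_mul, aux_gcd_mod, Nat.Coprime.gcd_mul_left_cancel _ (ZMod.val_coe_unit_coprime u)]

lemma aux_exists_unit_mul {n : ℕ} [NeZero n] {x s : ZMod n}
    (h : Nat.gcd x.val n = Nat.gcd s.val n) : ∃ u : (ZMod n)ˣ, (u : ZMod n) * s = x := by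
  have hn : 0 < n := Nat.pos_of_ne_zero (NeZero.ne n)
  set d := Nat.gcd s.val n with hd
  have hdn : d ∣ n := Nat.gcd_dvd_right _ _
  have hdpos : 0 < d := Nat.gcd_pos_of_pos_right _ hn
  set m := n / d with hm
  have hnm : n = d * m := (Nat.mul_div_cancel' hdn).symm
  have hm0 : NeZero m := ⟨fun h' => (NeZero.ne n) (by rw [hnm, h', mul_zero])⟩
  have hmn : m ∣ n := Nat.div_dvd_of_dvd hdn
  set a := s.val / d with ha
  set b := x.val / d with hb
  have hsa : d * a = s.val := Nat.mul_div_cancel' (Nat.gcd_dvd_left _ _)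
  have hxb : d * b = x.val := Nat.mul_div_cancel' (h ▸ Nat.gcd_dvd_left x.val n)
  have hca : Nat.Coprime a m := Nat.coprime_div_gcd_div_gcd (hd ▸ hdpos)
  have hcb : Nat.Coprime b m := by
    have := Nat.coprime_div_gcd_div_gcd (m := x.val) (n := n) (lt_of_lt_of_eq hdpos h.symm)
    rwa [h] at this
  set wa := ZMod.unitOfCoprime a hca with hwa
  set wb := ZMod.unitOfCoprime b hcb with hwb
  obtain ⟨u, hu⟩ := ZMod.unitsMap_surjective hmn (wb * wa⁻¹)
  refine ⟨u, ?_⟩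
  set c := (u : ZMod n).val with hc
  have h1 : ((c * a : ℕ) : ZMod m) = ((b : ℕ) : ZMod m) := by
    have h2 : ((ZMod.unitsMap hmn u : ZMod m)) = ZMod.castHom hmn (ZMod m) (u : ZMod n) := by
      rw [ZMod.unitsMap_def]; rfl
    have h3 : (c : ZMod m) = ZMod.castHom hmn (ZMod m) (u : ZMod n) := by
      rw [hc, ZMod.natCast_val, ZMod.castHom_apply]
    push_cast
    rw [h3, ← h2, hu]
    calc ((wb * wa⁻¹ : (ZMod m)ˣ) : ZMod m) * (a : ZMod m)
        = ((wb * wa⁻¹ : (ZMod m)ˣ) : ZMod m) * ((wa : (ZMod m)ˣ) : ZMod m) := by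
          rw [ZMod.coe_unitOfCoprime]
      _ = ((wb * wa⁻¹ * wa : (ZMod m)ˣ) : ZMod m) := by push_cast; ring
      _ = ((wb : (ZMod m)ˣ) : ZMod m) := by rw [inv_mul_cancel_right]
      _ = (b : ZMod m) := ZMod.coe_unitOfCoprime b hcb
  have h4 : (c * a) ≡ b [MOD m] := (ZMod.natCast_eq_natCast_iff _ _ _).mp h1
  have h5 : d * (c * a) ≡ d * b [MOD n] := by rw [hnm]; exact h4.mul_left' d
  have h6 : ((d * (c * a) : ℕ) : ZMod n) = ((d * b : ℕ) : ZMod n) :=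
    (ZMod.natCast_eq_natCast_iff _ _ _).mpr h5
  have h7 : ((d * (c * a) : ℕ) : ZMod n) = (c : ZMod n) * ((d * a : ℕ) : ZMod n) := by
    push_cast; ring
  rw [h7, hsa, hxb] at h6
  rwa [hc, ZMod.natCast_val, ZMod.cast_id, ZMod.natCast_val, ZMod.cast_id,
    ZMod.natCast_val, ZMod.cast_id] at h6

lemma aux_char_sum {n : ℕ} [NeZero n] {ζ : ℂ} (hζ : IsPrimitiveRoot ζ n) (t : ZMod n) :
    ∑ k : ZMod n, AddChar.zmodChar n hζ.pow_eq_one (t * k) = if t = 0 then (n : ℂ) else 0 := by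
  set ψ := AddChar.zmodChar n hζ.pow_eq_one with hψ
  have hprim : ψ.IsPrimitive := AddChar.zmodChar_primitive_of_primitive_root n hζ
  rcases eq_or_ne t 0 with rfl | ht
  · simp [ZMod.card]
  · have h1 : ∑ k : ZMod n, (ψ.mulShift t) k = 0 := by
      rw [AddChar.sum_eq_zero_iff_ne_zero]
      exact AddChar.ne_zero_iff.mpr (AddChar.ne_one_iff.mp (hprim ht))
    simpa [AddChar.mulShift_apply, ht] using h1

lemma aux_spec_eq {n : ℕ} [NeZero n] (S : Finset (ZMod n)) {ζ : ℂ} (hζ : IsPrimitiveRoot ζ n) :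
    spectrum ℂ (cayAdj n S) =
      Set.range (fun k : ZMod n => ∑ s ∈ S, AddChar.zmodChar n hζ.pow_eq_one (-(s * k))) := by
  set ψ := AddChar.zmodChar n hζ.pow_eq_one with hψ
  set lam := fun k : ZMod n => ∑ s ∈ S, ψ (-(s * k)) with hlam
  have hn0 : (n : ℂ) ≠ 0 := Nat.cast_ne_zero.mpr (NeZero.ne n)
  set W : Matrix (ZMod n) (ZMod n) ℂ := Matrix.of fun a k => ψ (a * k) with hW
  set V : Matrix (ZMod n) (ZMod n) ℂ := Matrix.of fun a k => (n : ℂ)⁻¹ * ψ (-(a * k)) with hV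
  have key : ∀ a c : ZMod n, ∑ k : ZMod n, ψ (a * k) * ψ (-(k * c)) =
      if a = c then (n : ℂ) else 0 := by
    intro a c
    have : ∀ k : ZMod n, ψ (a * k) * ψ (-(k * c)) = ψ ((a - c) * k) := by
      intro k
      rw [← AddChar.map_add_eq_mul]
      congr 1; ring
    simp_rw [this]
    rw [aux_char_sum hζ (a - c)]
    simp [sub_eq_zero]
  have hWV : W * V = 1 := by
    ext a c
    simp only [Matrix.mul_apply, Matrix.of_apply, hW, hV, Matrix.one_apply]
    calc ∑ k : ZMod n, ψ (a * k) * ((n : ℂ)⁻¹ * ψ (-(k * c)))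
        = (n : ℂ)⁻¹ * ∑ k : ZMod n, ψ (a * k) * ψ (-(k * c)) := by
          rw [Finset.mul_sum]; congr 1; ext k; ring
      _ = (n : ℂ)⁻¹ * (if a = c then (n : ℂ) else 0) := by rw [key]
      _ = if a = c then 1 else 0 := by
          split_ifs <;> simp [inv_mul_cancel₀ hn0]
  have hVW : V * W = 1 := by
    ext a c
    simp only [Matrix.mul_apply, Matrix.of_apply, hW, hV, Matrix.one_apply]
    calc ∑ k : ZMod n, (n : ℂ)⁻¹ * ψ (-(a * k)) * ψ (k * c)
        = (n : ℂ)⁻¹ * ∑ k : ZMod n, ψ (c * k) * ψ (-(k * a)) := by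
          rw [Finset.mul_sum]; congr 1; ext k; rw [mul_comm c k, mul_comm k a]; ring
      _ = (n : ℂ)⁻¹ * (if c = a then (n : ℂ) else 0) := by rw [key]
      _ = if a = c then 1 else 0 := by
          rcases eq_or_ne a c with rfl | hac
          · simp [inv_mul_cancel₀ hn0]
          · simp [hac, Ne.symm hac]
  have hAW : cayAdj n S * W = W * Matrix.diagonal lam := by
    ext a k
    rw [Matrix.mul_apply, Matrix.mul_diagonal]
    have step1 : ∑ b : ZMod n, cayAdj n S a b * W b k
        = ∑ c : ZMod n, (if c ∈ S then 1 else 0) * ψ ((a - c) * k) := by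
      apply Finset.sum_nbij' (i := fun b => a - b) (j := fun c => a - c)
      · intros; exact Finset.mem_univ _
      · intros; exact Finset.mem_univ _
      · intro b _; simp
      · intro c _; simp
      · intro b _
        show cayAdj n S a b * W b k = _
        simp only [cayAdj, hW, Matrix.of_apply]
        congr 2
        rw [sub_sub_cancel]
    rw [step1]
    have step2 : ∑ c : ZMod n, (if c ∈ S then 1 else 0) * ψ ((a - c) * k)
        = ∑ c ∈ S, ψ ((a - c) * k) := by
      simp only [ite_mul, one_mul, zero_mul]
      rw [Finset.sum_ite_mem, Finset.univ_inter]
    rw [step2]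
    have step3 : ∀ c : ZMod n, ψ ((a - c) * k) = ψ (a * k) * ψ (-(c * k)) := by
      intro c
      rw [← AddChar.map_add_eq_mul]
      congr 1; ring
    simp_rw [step3, ← Finset.mul_sum]
    rfl
  set Wu : (Matrix (ZMod n) (ZMod n) ℂ)ˣ := ⟨W, V, hWV, hVW⟩ with hWu
  have hA : cayAdj n S = (Wu : Matrix (ZMod n) (ZMod n) ℂ) * Matrix.diagonal lam *
      ((Wu⁻¹ : (Matrix (ZMod n) (ZMod n) ℂ)ˣ) : Matrix (ZMod n) (ZMod n) ℂ) := by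
    show cayAdj n S = W * Matrix.diagonal lam * V
    calc cayAdj n S = cayAdj n S * (W * V) := by rw [hWV, mul_one]
      _ = cayAdj n S * W * V := by rw [Matrix.mul_assoc]
      _ = W * Matrix.diagonal lam * V := by rw [hAW]
  rw [hA, spectrum.units_conjugate, spectrum_diagonal]

/-- A circulant graph Cay(Z_n, S) is integral iff S is a gcd-set, i.e. a union of the
sets S_n(d) over a set D of proper divisors d of n. -/
theorem stmt10 (n : ℕ) [NeZero n] (S : Finset (ZMod n)) (h0 : (0 : ZMod n) ∉ S)
    (hsym : ∀ s ∈ S, -s ∈ S) :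
    (∀ μ ∈ spectrum ℂ (cayAdj n S), ∃ m : ℤ, μ = (m : ℂ)) ↔
      ∃ D : Finset ℕ, (∀ d ∈ D, d ∣ n ∧ d < n) ∧
        S = D.biUnion (fun d => gcdSet n d) := by
  classical
  have hn : 0 < n := Nat.pos_of_ne_zero (NeZero.ne n)
  set N : ℕ+ := ⟨n, hn⟩ with hN
  set K := CyclotomicField N ℚ with hK
  have hirr : Irreducible (Polynomial.cyclotomic N ℚ) :=
    Polynomial.cyclotomic.irreducible_rat N.pos
  haveI : NeZero (N : ℕ) := ⟨N.ne_zero⟩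
  haveI : IsCyclotomicExtension {(N : ℕ)} ℚ K := by
    show IsCyclotomicExtension {(N : ℕ)} ℚ (CyclotomicField N ℚ)
    exact CyclotomicField.isCyclotomicExtension (N : ℕ) ℚ
  set ζK : K := IsCyclotomicExtension.zeta N ℚ K with hmu
  have hμ : IsPrimitiveRoot ζK N := IsCyclotomicExtension.zeta_spec N ℚ K
  haveI : FiniteDimensional ℚ K := IsCyclotomicExtension.finiteDimensional {(N : ℕ)} ℚ K
  haveI : IsGalois ℚ K := IsCyclotomicExtension.isGalois {(N : ℕ)} ℚ K
  haveI : Algebra.IsAlgebraic ℚ K := Algebra.IsAlgebraic.of_finite ℚ K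
  set φ : K →ₐ[ℚ] ℂ := IsAlgClosed.lift with hphi
  have hζ : IsPrimitiveRoot (φ ζK) n := by
    have := hμ.map_of_injective (f := φ.toRingHom) (φ.toRingHom.injective)
    exact this
  set eqp := IsCyclotomicExtension.autEquivPow K hirr with heqp
  have hpow : ζK ^ n = 1 := hμ.pow_eq_one
  let toU : (K ≃ₐ[ℚ] K) → (ZMod n)ˣ := fun σ => eqp σ
  let fromU : (ZMod n)ˣ → (K ≃ₐ[ℚ] K) := fun u => eqp.symm u
  have htofrom : ∀ u : (ZMod n)ˣ, toU (fromU u) = u := fun u => eqp.apply_symm_apply u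
  have hEσ : ∀ σ : K ≃ₐ[ℚ] K, σ ζK = ζK ^ ((toU σ : ZMod n)).val := by
    intro σ
    have h1 := hμ.autToPow_spec ℚ σ
    have h2 : (eqp σ : ZMod N) = (hμ.autToPow ℚ σ : ZMod N) := by
      rw [heqp]
      simp [IsCyclotomicExtension.autEquivPow]
    rw [← h2] at h1
    exact h1.symm
  have hfix : ∀ x : K, (∀ σ : K ≃ₐ[ℚ] K, σ x = x) → ∃ q : ℚ, algebraMap ℚ K q = x := by
    intro x hx
    have hmem : x ∈ IntermediateField.fixedField (⊤ : Subgroup (K ≃ₐ[ℚ] K)) := by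
      rintro ⟨σ, -⟩
      exact hx σ
    have htop : IntermediateField.fixedField (⊤ : Subgroup (K ≃ₐ[ℚ] K)) = ⊥ :=
      (IsGalois.tfae.out 0 1).mp (inferInstance : IsGalois ℚ K)
    rw [htop] at hmem
    exact IntermediateField.mem_bot.mp hmem
  set ψK : AddChar (ZMod n) K := AddChar.zmodChar n hpow with hpsiK
  have hσψ : ∀ (σ : K ≃ₐ[ℚ] K) (x : ZMod n), σ (ψK x) = ψK ((toU σ : ZMod n) * x) := by
    intro σ x
    rw [hpsiK, AddChar.zmodChar_apply, map_pow, hEσ σ, ← pow_mul, AddChar.zmodChar_apply,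
      ZMod.val_mul]
    exact pow_eq_pow_mod _ hpow
  have hμint : IsIntegral ℤ ζK := by
    refine ⟨Polynomial.X ^ n - Polynomial.C 1, Polynomial.monic_X_pow_sub_C 1 (NeZero.ne n), ?_⟩
    simp [Polynomial.eval₂_sub, hpow]
  have hψint : ∀ x : ZMod n, IsIntegral ℤ (ψK x) := fun x => by
    rw [hpsiK, AddChar.zmodChar_apply]; exact hμint.pow _
  have hratint : ∀ q : ℚ, IsIntegral ℤ (algebraMap ℚ K q) → ∃ m : ℤ, (m : ℚ) = q := by
    intro q hq
    have := (isIntegral_algebraMap_iff (algebraMap ℚ K).injective).mp hq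
    obtain ⟨m, hm⟩ := IsIntegrallyClosed.isIntegral_iff.mp this
    exact ⟨m, by exact_mod_cast hm⟩
  have hcast : ∀ q : ℚ, φ (algebraMap ℚ K q) = (q : ℂ) := by
    intro q; rw [AlgHom.commutes]; simp
  set ψ : AddChar (ZMod n) ℂ := AddChar.zmodChar n hζ.pow_eq_one with hpsi
  have hφψ : ∀ x : ZMod n, φ (ψK x) = ψ x := by
    intro x
    rw [hpsiK, hpsi, AddChar.zmodChar_apply, AddChar.zmodChar_apply, map_pow]
  set lam : ZMod n → ℂ := fun k => ∑ s ∈ S, ψ (-(s * k)) with hlam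
  set Lam : ZMod n → K := fun k => ∑ s ∈ S, ψK (-(s * k)) with hLam
  have hφLam : ∀ k, φ (Lam k) = lam k := by
    intro k
    rw [hLam, hlam]
    simp only [map_sum, hφψ]
  have hspec : spectrum ℂ (cayAdj n S) = Set.range lam := aux_spec_eq S hζ
  have hσLam : ∀ (σ : K ≃ₐ[ℚ] K) (k : ZMod n), σ (Lam k) = Lam ((toU σ : ZMod n) * k) := by
    intro σ k
    rw [hLam]
    simp only [map_sum, hσψ]
    refine Finset.sum_congr rfl fun s _ => ?_
    congr 1; ring
  have hinv : ∀ x : ZMod n, ∑ k : ZMod n, lam k * ψ (k * x) = if x ∈ S then (n : ℂ) else 0 := by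
    intro x
    rw [hlam]
    calc ∑ k : ZMod n, (∑ s ∈ S, ψ (-(s * k))) * ψ (k * x)
        = ∑ k : ZMod n, ∑ s ∈ S, ψ (-(s * k)) * ψ (k * x) := by
          refine Finset.sum_congr rfl fun k _ => ?_; rw [Finset.sum_mul]
      _ = ∑ s ∈ S, ∑ k : ZMod n, ψ (-(s * k)) * ψ (k * x) := Finset.sum_comm
      _ = ∑ s ∈ S, ∑ k : ZMod n, ψ ((x - s) * k) := by
          refine Finset.sum_congr rfl fun s _ => Finset.sum_congr rfl fun k _ => ?_
          rw [← AddChar.map_add_eq_mul]; congr 1; ring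
      _ = ∑ s ∈ S, (if x - s = 0 then (n : ℂ) else 0) := by
          refine Finset.sum_congr rfl fun s _ => ?_
          exact aux_char_sum hζ (x - s)
      _ = ∑ s ∈ S, (if x = s then (n : ℂ) else 0) := by
          refine Finset.sum_congr rfl fun s _ => ?_
          simp [sub_eq_zero]
      _ = if x ∈ S then (n : ℂ) else 0 := by rw [Finset.sum_ite_eq]
  constructor
  · intro h
    have hlint : ∀ k, ∃ m : ℤ, lam k = (m : ℂ) := fun k =>
      h (lam k) (by rw [hspec]; exact ⟨k, rfl⟩)
    have hLint : ∀ k, ∃ m : ℤ, Lam k = (m : K) := by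
      intro k
      obtain ⟨m, hm⟩ := hlint k
      refine ⟨m, φ.toRingHom.injective ?_⟩
      show φ (Lam k) = φ ((m : K))
      rw [hφLam k, hm, map_intCast]
    have hLinv : ∀ (u : (ZMod n)ˣ) (k : ZMod n), Lam ((u : ZMod n) * k) = Lam k := by
      intro u k
      obtain ⟨m, hm⟩ := hLint k
      have h1 : fromU u (Lam k) = Lam ((toU (fromU u) : ZMod n) * k) := hσLam (fromU u) k
      rw [htofrom] at h1
      rw [← h1, hm, map_intCast]
    have hlinv : ∀ (u : (ZMod n)ˣ) (k : ZMod n), lam ((u : ZMod n) * k) = lam k := by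
      intro u k
      rw [← hφLam, ← hφLam, hLinv]
    have hSinv : ∀ (u : (ZMod n)ˣ) (x : ZMod n), x ∈ S → (u : ZMod n) * x ∈ S := by
      intro u x hx
      have h1 : ∑ k : ZMod n, lam k * ψ (k * ((u : ZMod n) * x))
          = ∑ k : ZMod n, lam k * ψ (k * x) := by
        apply Finset.sum_nbij' (i := fun k => (u : ZMod n) * k)
          (j := fun k => ((u⁻¹ : (ZMod n)ˣ) : ZMod n) * k)
        · intros; exact Finset.mem_univ _
        · intros; exact Finset.mem_univ _
        · intro k _; simp
        · intro k _; simp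
        · intro k _
          rw [hlinv u k]
          congr 1; ring
      rw [hinv, hinv] at h1
      by_contra hc
      rw [if_neg hc, if_pos hx] at h1
      exact (Nat.cast_ne_zero.mpr (NeZero.ne n) : (n : ℂ) ≠ 0) h1.symm
    refine ⟨S.image (fun s => Nat.gcd s.val n), ?_, ?_⟩
    · intro d hd
      obtain ⟨s, hs, rfl⟩ := Finset.mem_image.mp hd
      have hs0 : s ≠ 0 := fun e => h0 (e ▸ hs)
      have hsv : s.val ≠ 0 := fun e => hs0 ((ZMod.val_eq_zero s).mp e)
      refine ⟨Nat.gcd_dvd_right _ _, ?_⟩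
      calc Nat.gcd s.val n ≤ s.val :=
            Nat.le_of_dvd (Nat.pos_of_ne_zero hsv) (Nat.gcd_dvd_left _ _)
        _ < n := ZMod.val_lt s
    · ext x
      simp only [Finset.mem_biUnion, Finset.mem_image, gcdSet, Finset.mem_filter,
        Finset.mem_univ, true_and]
      constructor
      · intro hx
        exact ⟨Nat.gcd x.val n, ⟨x, hx, rfl⟩, rfl⟩
      · rintro ⟨d, ⟨s, hs, rfl⟩, hxd⟩
        obtain ⟨u, hu⟩ := aux_exists_unit_mul (x := x) (s := s) hxd
        rw [← hu]
        exact hSinv u s hs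
  · rintro ⟨D, hD, hSD⟩
    have hSinv : ∀ (u : (ZMod n)ˣ) (x : ZMod n), x ∈ S → (u : ZMod n) * x ∈ S := by
      intro u x hx
      rw [hSD] at hx ⊢
      obtain ⟨d, hd, hxd⟩ := Finset.mem_biUnion.mp hx
      refine Finset.mem_biUnion.mpr ⟨d, hd, ?_⟩
      simp only [gcdSet, Finset.mem_filter, Finset.mem_univ, true_and] at hxd ⊢
      rw [aux_gcd_unit_mul]
      exact hxd
    intro z hz
    rw [hspec] at hz
    obtain ⟨k, rfl⟩ := hz
    have hfixk : ∀ σ : K ≃ₐ[ℚ] K, σ (Lam k) = Lam k := by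
      intro σ
      rw [hσLam σ k]
      set u := toU σ with hu
      rw [hLam]
      apply Finset.sum_nbij' (i := fun s => (u : ZMod n) * s)
        (j := fun s => ((u⁻¹ : (ZMod n)ˣ) : ZMod n) * s)
      · intro s hs; exact hSinv u s hs
      · intro s hs; exact hSinv u⁻¹ s hs
      · intro s _; simp
      · intro s _; simp
      · intro s _
        congr 1
        ring
    obtain ⟨q, hq⟩ := hfix (Lam k) hfixk
    have hLamint : IsIntegral ℤ (Lam k) := by
      rw [hLam]
      exact IsIntegral.sum (fun s => ψK (-(s * k))) (fun s _ => hψint _)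
    rw [← hq] at hLamint
    obtain ⟨m, hm⟩ := hratint q hLamint
    refine ⟨m, ?_⟩
    rw [← hφLam, ← hq, hcast, ← hm]
    norm_cast
end

section
/- Suppose the circulant graphs Cay(Z_n, S₁), Cay(Z_n, S₂), Cay(Z_n, S₃) with pairwise disjoint symmetric connection sets S₁, S₂, S₃ and transition matrices H₁, H₂, H₃ satisfy: along a common real sequence {t_m}, H₁(t_m)e_0 → γ e_{n/2}, H₂(t_m)e_0 → ζ e_0, and H₃(t_m) = I for all m. Then the transition matrix H of Cay(Z_n, S₁ ∪ S₂ ∪ S₃) satisfies H(t_m)e_0 → ζγ e_{n/2}. -/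
open Matrix Complex Filter Finset

lemma cayAdj_circ (n : ℕ) [NeZero n] (S : Finset (ZMod n)) :
    cayAdj n S = Matrix.circulant (fun x => if x ∈ S then (1:ℂ) else 0) := rfl

lemma cayAdj_commute (n : ℕ) [NeZero n] (S T : Finset (ZMod n)) :
    Commute (cayAdj n S) (cayAdj n T) := by
  rw [cayAdj_circ, cayAdj_circ]
  exact Matrix.circulant_mul_comm _ _

lemma cayAdj_union (n : ℕ) [NeZero n] (S T : Finset (ZMod n)) (h : Disjoint S T) :
    cayAdj n (S ∪ T) = cayAdj n S + cayAdj n T := by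
  ext a b
  simp only [cayAdj, Matrix.add_apply, Finset.mem_union]
  by_cases hS : a - b ∈ S
  · simp [hS, Finset.disjoint_left.mp h hS]
  · by_cases hT : a - b ∈ T <;> simp [hS, hT]

lemma transM_herm (n : ℕ) [NeZero n] (S : Finset (ZMod n))
    (hsym : ∀ s ∈ S, -s ∈ S) (t : ℝ) :
    (transM n S t)ᴴ = NormedSpace.exp (-((-(t : ℂ) * Complex.I) • cayAdj n S)) := by
  rw [transM, ← Matrix.exp_conjTranspose]
  congr 1
  ext a b
  simp only [Matrix.conjTranspose_apply, Matrix.smul_apply, Matrix.neg_apply, cayAdj]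
  have : b - a ∈ S ↔ a - b ∈ S := by
    constructor
    · intro h; simpa using hsym _ h
    · intro h; simpa using hsym _ h
  by_cases h : a - b ∈ S
  · simp [this, h]
  · simp [this, h]

lemma transM_unitary (n : ℕ) [NeZero n] (S : Finset (ZMod n))
    (hsym : ∀ s ∈ S, -s ∈ S) (t : ℝ) :
    transM n S t * (transM n S t)ᴴ = 1 := by
  rw [transM_herm n S hsym t, transM]
  have h := Matrix.exp_add_of_commute ((-(t : ℂ) * Complex.I) • cayAdj n S)
    (-((-(t : ℂ) * Complex.I) • cayAdj n S)) (Commute.neg_right (Commute.refl _))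
  rw [← h]
  simp [NormedSpace.exp_zero]

lemma transM_entry_le (n : ℕ) [NeZero n] (S : Finset (ZMod n))
    (hsym : ∀ s ∈ S, -s ∈ S) (t : ℝ) (a b : ZMod n) :
    ‖transM n S t a b‖ ≤ 1 := by
  have h := congrFun (congrFun (transM_unitary n S hsym t) a) a
  simp only [Matrix.mul_apply, Matrix.conjTranspose_apply, Matrix.one_apply_eq] at h
  have h2 : ∑ c, Complex.normSq (transM n S t a c) = 1 := by
    have := congrArg Complex.re h
    simpa [Complex.mul_conj] using this
  have h3 : Complex.normSq (transM n S t a b) ≤ 1 := by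
    rw [← h2]
    exact Finset.single_le_sum (fun c _ => Complex.normSq_nonneg _) (Finset.mem_univ b)
  rw [← Complex.sq_norm] at h3
  have h4 : ‖transM n S t a b‖ ≤ 1 := by nlinarith [norm_nonneg (transM n S t a b)]
  simpa using h4

lemma transM_mulVec_norm_le (n : ℕ) [NeZero n] (S : Finset (ZMod n))
    (hsym : ∀ s ∈ S, -s ∈ S) (t : ℝ) (u : ZMod n → ℂ) :
    ‖(transM n S t).mulVec u‖ ≤ (Fintype.card (ZMod n)) * ‖u‖ := by
  rw [pi_norm_le_iff_of_nonneg (by positivity)]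
  intro a
  calc ‖∑ b, transM n S t a b * u b‖ ≤ ∑ b, ‖transM n S t a b * u b‖ := norm_sum_le _ _
    _ ≤ ∑ _b : ZMod n, ‖u‖ := by
        refine Finset.sum_le_sum fun b _ => ?_
        rw [norm_mul]
        calc ‖transM n S t a b‖ * ‖u b‖ ≤ 1 * ‖u b‖ :=
              mul_le_mul_of_nonneg_right (transM_entry_le n S hsym t a b) (norm_nonneg _)
          _ = ‖u b‖ := one_mul _
          _ ≤ ‖u‖ := norm_le_pi_norm u b
    _ = (Fintype.card (ZMod n)) * ‖u‖ := by simp [Finset.sum_const, nsmul_eq_mul]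

lemma transM_union (n : ℕ) [NeZero n] (S T : Finset (ZMod n)) (h : Disjoint S T) (t : ℝ) :
    transM n (S ∪ T) t = transM n S t * transM n T t := by
  rw [transM, transM, transM, cayAdj_union n S T h, smul_add]
  exact Matrix.exp_add_of_commute _ _ (((cayAdj_commute n S T).smul_left _).smul_right _)

/-- If, along a common time sequence, H₁(t_m)e₀ → γe_{n/2}, H₂(t_m)e₀ → ζe₀, and
H₃(t_m) = I, then the transition matrix of the union satisfies
H(t_m)e₀ → ζγ e_{n/2}. -/
theorem stmt15 (n : ℕ) [NeZero n] (heven : 2 ∣ n) (S₁ S₂ S₃ : Finset (ZMod n))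
    (h01 : (0 : ZMod n) ∉ S₁) (h02 : (0 : ZMod n) ∉ S₂) (h03 : (0 : ZMod n) ∉ S₃)
    (hsym1 : ∀ s ∈ S₁, -s ∈ S₁) (hsym2 : ∀ s ∈ S₂, -s ∈ S₂) (hsym3 : ∀ s ∈ S₃, -s ∈ S₃)
    (h12 : Disjoint S₁ S₂) (h13 : Disjoint S₁ S₃) (h23 : Disjoint S₂ S₃)
    (t : ℕ → ℝ) (γ ζ : ℂ) (hγ : ‖γ‖ = 1) (hζ : ‖ζ‖ = 1)
    (h1 : Tendsto (fun m => (transM n S₁ (t m)).mulVec (Pi.single 0 1 : ZMod n → ℂ))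
      atTop (nhds (γ • (Pi.single ((n / 2 : ℕ) : ZMod n) 1 : ZMod n → ℂ))))
    (h2 : Tendsto (fun m => (transM n S₂ (t m)).mulVec (Pi.single 0 1 : ZMod n → ℂ))
      atTop (nhds (ζ • (Pi.single (0 : ZMod n) 1 : ZMod n → ℂ))))
    (h3 : ∀ m, transM n S₃ (t m) = 1) :
    Tendsto (fun m => (transM n (S₁ ∪ S₂ ∪ S₃) (t m)).mulVec (Pi.single 0 1 : ZMod n → ℂ))
      atTop (nhds ((ζ * γ) • (Pi.single ((n / 2 : ℕ) : ZMod n) 1 : ZMod n → ℂ))) := by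
  set e0 : ZMod n → ℂ := Pi.single 0 1 with he0
  set en : ZMod n → ℂ := Pi.single ((n / 2 : ℕ) : ZMod n) 1 with hen
  have hdisj : Disjoint (S₁ ∪ S₂) S₃ := Finset.disjoint_union_left.mpr ⟨h13, h23⟩
  have key : ∀ m, (transM n (S₁ ∪ S₂ ∪ S₃) (t m)).mulVec e0
      = (transM n S₁ (t m)).mulVec ((transM n S₂ (t m)).mulVec e0) := by
    intro m
    rw [transM_union n _ _ hdisj, transM_union n _ _ h12, h3, mul_one, ← Matrix.mulVec_mulVec]
  simp only [key]
  have decomp : ∀ m, (transM n S₁ (t m)).mulVec ((transM n S₂ (t m)).mulVec e0)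
      = (transM n S₁ (t m)).mulVec ((transM n S₂ (t m)).mulVec e0 - ζ • e0)
        + ζ • ((transM n S₁ (t m)).mulVec e0) := by
    intro m
    rw [Matrix.mulVec_sub, Matrix.mulVec_smul]
    abel
  simp only [decomp]
  have T2 : Tendsto (fun m => ζ • ((transM n S₁ (t m)).mulVec e0)) atTop
      (nhds ((ζ * γ) • en)) := by
    have := h1.const_smul ζ
    rwa [smul_smul] at this
  have hsub : Tendsto (fun m => (transM n S₂ (t m)).mulVec e0 - ζ • e0) atTop (nhds 0) := by
    simpa using h2.sub (tendsto_const_nhds (x := ζ • e0))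
  have T1 : Tendsto (fun m => (transM n S₁ (t m)).mulVec
      ((transM n S₂ (t m)).mulVec e0 - ζ • e0)) atTop (nhds 0) := by
    apply squeeze_zero_norm
      (fun m => transM_mulVec_norm_le n S₁ hsym1 (t m) _)
    have : Tendsto (fun m => ‖(transM n S₂ (t m)).mulVec e0 - ζ • e0‖) atTop (nhds 0) := by
      simpa using hsub.norm
    simpa using this.const_mul ((Fintype.card (ZMod n) : ℝ))
  simpa using T1.add T2
end

section
/- Let m ∈ ℕ and n = mp with p an odd prime. If S ⊆ Z_n \ {0} is symmetric and p ∤ s for every s ∈ S, then the circulant graph Cay(Z_n, S) does not exhibit pretty good state transfer between any pair of distinct vertices. -/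
open Matrix Complex Filter Finset

/-- If `w` is a row eigenvector of `M`, it is a row eigenvector of `exp M`. -/
theorem vecMul_exp_eig {N : Type*} [Fintype N] [DecidableEq N]
    (M : Matrix N N ℂ) (w : N → ℂ) (μ : ℂ) (h : w ᵥ* M = μ • w) :
    w ᵥ* (NormedSpace.exp M) = Complex.exp μ • w := by
  have hpow : ∀ k : ℕ, w ᵥ* (M ^ k) = μ ^ k • w := by
    intro k
    induction k with
    | zero => simp [Matrix.vecMul_one]
    | succ k ih =>
      rw [pow_succ, ← Matrix.vecMul_vecMul, ih, Matrix.smul_vecMul, h, smul_smul, ← pow_succ]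
  have hsum : Summable (fun k : ℕ => (k.factorial : ℂ)⁻¹ • M ^ k) := by
    letI : SeminormedRing (Matrix N N ℂ) := Matrix.linftyOpSemiNormedRing
    letI : NormedRing (Matrix N N ℂ) := Matrix.linftyOpNormedRing
    letI : NormedAlgebra ℂ (Matrix N N ℂ) := Matrix.linftyOpNormedAlgebra
    exact NormedSpace.expSeries_summable' (𝕂 := ℂ) M
  have hμsum : Summable (fun k : ℕ => (k.factorial : ℂ)⁻¹ * μ ^ k) := by
    simpa [smul_eq_mul] using NormedSpace.expSeries_summable' (𝕂 := ℂ) μ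
  let L0 : Matrix N N ℂ →ₗ[ℂ] (N → ℂ) :=
    { toFun := fun A => w ᵥ* A
      map_add' := fun A B => Matrix.vecMul_add A B w
      map_smul' := fun c A => by
        ext i
        simp only [Matrix.vecMul, dotProduct, Pi.smul_apply, Matrix.smul_apply,
          smul_eq_mul, RingHom.id_apply, Finset.mul_sum]
        exact Finset.sum_congr rfl fun a _ => by ring }
  let L : Matrix N N ℂ →L[ℂ] (N → ℂ) := ⟨L0, L0.continuous_of_finiteDimensional⟩
  have hmap := L.map_tsum hsum
  rw [NormedSpace.exp_eq_tsum (𝕂 := ℂ)]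
  show L (∑' k : ℕ, (k.factorial : ℂ)⁻¹ • M ^ k) = _
  rw [hmap]
  have hterm : ∀ k : ℕ, L ((k.factorial : ℂ)⁻¹ • M ^ k) = ((k.factorial : ℂ)⁻¹ * μ ^ k) • w := by
    intro k
    have : L ((k.factorial : ℂ)⁻¹ • M ^ k) = (k.factorial : ℂ)⁻¹ • (w ᵥ* (M ^ k)) := L.map_smul _ _
    rw [this, hpow, smul_smul]
  rw [tsum_congr hterm, hμsum.tsum_smul_const]
  congr 1
  rw [Complex.exp_eq_exp_ℂ, NormedSpace.exp_eq_tsum (𝕂 := ℂ)]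
  exact (tsum_congr fun k => by rw [smul_eq_mul]).symm

/-- If n = mp with p an odd prime and no element of S is divisible by p, then
Cay(Z_n, S) does not exhibit pretty good state transfer between any pair of
distinct vertices. -/
theorem stmt19 (m p : ℕ) (hm : 0 < m) (hp : p.Prime) (hodd : Odd p)
    (n : ℕ) [NeZero n] (hn : n = m * p) (S : Finset (ZMod n))
    (h0 : (0 : ZMod n) ∉ S) (hsym : ∀ s ∈ S, -s ∈ S)
    (hps : ∀ s ∈ S, ¬ p ∣ s.val) :
    ∀ u v : ZMod n, u ≠ v →
      ¬ ∃ (t : ℕ → ℝ) (γ : ℂ), ‖γ‖ = 1 ∧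
        Tendsto (fun j => (transM n S (t j)).mulVec (Pi.single u 1 : ZMod n → ℂ))
          atTop (nhds (γ • (Pi.single v 1 : ZMod n → ℂ))) := by
  intro u v huv
  rintro ⟨t, γ, hγ, htend⟩
  have hn0 : (n : ℕ) ≠ 0 := NeZero.ne n
  have hγ0 : γ ≠ 0 := by intro h; rw [h, norm_zero] at hγ; norm_num at hγ
  set ω : ℂ := Complex.exp (2 * Real.pi * Complex.I / n) with hωdef
  have hprim : IsPrimitiveRoot ω n := Complex.isPrimitiveRoot_exp n hn0
  have hω1 : ω ^ n = 1 := hprim.pow_eq_one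
  have hωne : ω ≠ 0 := Complex.exp_ne_zero _
  set ee : ZMod n → ℂ := fun k => ω ^ k.val with heedef
  have ee_zero : ee 0 = 1 := by simp [heedef]
  have ee_add : ∀ a b : ZMod n, ee (a + b) = ee a * ee b := by
    intro a b
    simp only [heedef]
    rw [ZMod.val_add, ← pow_add]
    conv_rhs => rw [← Nat.mod_add_div (a.val + b.val) n]
    rw [pow_add, pow_mul, hω1, one_pow, mul_one]
  have ee_ne : ∀ a : ZMod n, ee a ≠ 0 := fun a => pow_ne_zero _ hωne
  have ee_eq_one : ∀ a : ZMod n, ee a = 1 → a = 0 := by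
    intro a ha
    have hdvd : n ∣ a.val := (hprim.pow_eq_one_iff_dvd a.val).mp ha
    exact (ZMod.val_eq_zero a).mp (Nat.eq_zero_of_dvd_of_lt hdvd (ZMod.val_lt a))
  have ee_nat : ∀ (r : ℕ) (x : ZMod n), ee ((r : ZMod n) * x) = ee x ^ r := by
    intro r x
    induction r with
    | zero => simpa using ee_zero
    | succ r ih =>
      have h1 : ((r + 1 : ℕ) : ZMod n) * x = (r : ZMod n) * x + x := by push_cast; ring
      rw [h1, ee_add, ih, pow_succ]
  set lam : ZMod n → ℂ := fun l => ∑ s ∈ S, ee (l * s) with hlamdef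
  -- row eigenvectors of the adjacency matrix
  have hAeig : ∀ l : ZMod n,
      (fun a => ee (l * a)) ᵥ* (cayAdj n S) = lam l • (fun a => ee (l * a)) := by
    intro l
    funext b
    have h1 : ((fun a => ee (l * a)) ᵥ* (cayAdj n S)) b
        = ∑ a : ZMod n, (if a - b ∈ S then ee (l * a) else 0) := by
      simp [Matrix.vecMul, dotProduct, cayAdj, mul_ite, mul_one, mul_zero]
    have h2 : ∑ a : ZMod n, (if a - b ∈ S then ee (l * a) else 0)
        = ∑ a : ZMod n, (if a ∈ S then ee (l * b) * ee (l * a) else 0) :=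
      Fintype.sum_equiv (Equiv.subRight b) _ _ (by
        intro x
        simp only [Equiv.subRight_apply]
        by_cases hx : x - b ∈ S
        · rw [if_pos hx, if_pos hx, ← ee_add]
          congr 1
          ring
        · rw [if_neg hx, if_neg hx])
    rw [h1, h2, Finset.sum_ite_mem, Finset.univ_inter, ← Finset.mul_sum]
    simp only [Pi.smul_apply, smul_eq_mul, hlamdef]
    ring
  -- row eigenvectors of the transition matrix
  have hTeig : ∀ (τ : ℝ) (l : ZMod n),
      (fun a => ee (l * a)) ᵥ* (transM n S τ)
        = Complex.exp ((-(τ : ℂ) * Complex.I) * lam l) • (fun a => ee (l * a)) := by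
    intro τ l
    have hs : (fun a => ee (l * a)) ᵥ* ((-(τ : ℂ) * Complex.I) • cayAdj n S)
        = ((-(τ : ℂ) * Complex.I) * lam l) • (fun a => ee (l * a)) := by
      have hsm : (fun a => ee (l * a)) ᵥ* ((-(τ : ℂ) * Complex.I) • cayAdj n S)
          = (-(τ : ℂ) * Complex.I) • ((fun a => ee (l * a)) ᵥ* cayAdj n S) := by
        ext i
        simp only [Matrix.vecMul, dotProduct, Matrix.smul_apply, Pi.smul_apply,
          smul_eq_mul, Finset.mul_sum]
        exact Finset.sum_congr rfl fun a _ => by ring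
      rw [hsm, hAeig, smul_smul]
    simp only [transM]
    exact vecMul_exp_eig _ _ _ hs
  set d : ZMod n := v - u with hd
  -- the limiting phases
  have hF : ∀ l : ZMod n,
      Tendsto (fun k => Complex.exp ((-(t k : ℂ) * Complex.I) * lam l)) atTop
        (nhds (γ * ee (l * d))) := by
    intro l
    have hcont : Continuous (fun x : ZMod n → ℂ => ∑ a, ee (l * a) * x a) :=
      continuous_finset_sum _ fun a _ => continuous_const.mul (continuous_apply a)
    have h2 := (hcont.tendsto _).comp htend
    simp only [Function.comp_def] at h2
    have h3 : (fun k => ∑ a, ee (l * a) * ((transM n S (t k)).mulVec (Pi.single u 1)) a)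
        = fun k => Complex.exp ((-(t k : ℂ) * Complex.I) * lam l) * ee (l * u) := by
      funext k
      have hdp : ∑ a, ee (l * a) * ((transM n S (t k)).mulVec (Pi.single u 1)) a
          = (fun a => ee (l * a)) ⬝ᵥ ((transM n S (t k)).mulVec (Pi.single u 1)) := rfl
      rw [hdp, Matrix.dotProduct_mulVec, hTeig, smul_dotProduct,
        dotProduct_single]
      simp [smul_eq_mul]
    have h4 : ∑ a, ee (l * a) * (γ • (Pi.single v 1 : ZMod n → ℂ)) a = γ * ee (l * v) := by
      have hdp : ∑ a, ee (l * a) * (γ • (Pi.single v 1 : ZMod n → ℂ)) a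
          = (fun a => ee (l * a)) ⬝ᵥ (γ • (Pi.single v 1 : ZMod n → ℂ)) := rfl
      rw [hdp, dotProduct_smul, dotProduct_single]
      simp [smul_eq_mul]
    rw [h3, h4] at h2
    have h6 := h2.mul_const (ee (l * u))⁻¹
    have h7 : (fun k => Complex.exp ((-(t k : ℂ) * Complex.I) * lam l) * ee (l * u)
          * (ee (l * u))⁻¹)
        = fun k => Complex.exp ((-(t k : ℂ) * Complex.I) * lam l) := by
      funext k
      exact mul_inv_cancel_right₀ (ee_ne _) _
    have h8 : γ * ee (l * v) * (ee (l * u))⁻¹ = γ * ee (l * d) := by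
      have hlv : l * v = l * u + l * d := by rw [hd]; ring
      rw [hlv, ee_add, mul_comm (ee (l * u)) (ee (l * d)), ← mul_assoc,
        mul_inv_cancel_right₀ (ee_ne (l * u))]
    rw [h7, h8] at h6
    exact h6
  -- symmetry gives (ee d)^2 = 1
  have hE : ee d * ee d = 1 := by
    have hlamneg : lam (-1 : ZMod n) = lam (1 : ZMod n) := by
      simp only [hlamdef]
      refine Finset.sum_nbij' (fun s => -s) (fun s => -s) (fun s hs => hsym s hs)
        (fun s hs => hsym s hs) (fun s _ => neg_neg s) (fun s _ => neg_neg s) ?_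
      intro s _
      congr 1
      ring
    have h1 := hF 1
    have h2 := hF (-1)
    have heq : (fun k => Complex.exp ((-(t k : ℂ) * Complex.I) * lam (-1 : ZMod n)))
        = fun k => Complex.exp ((-(t k : ℂ) * Complex.I) * lam (1 : ZMod n)) := by
      funext k; rw [hlamneg]
    rw [heq] at h2
    have huniq := tendsto_nhds_unique h2 h1
    have h3 : ee (-1 * d) = ee (1 * d) := mul_left_cancel₀ hγ0 huniq
    have h4 : ee (1 * d) * ee (-1 * d) = 1 := by
      rw [← ee_add]
      have : (1 : ZMod n) * d + (-1 : ZMod n) * d = 0 := by ring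
      rw [this, ee_zero]
    calc ee d * ee d = ee (1 * d) * ee (1 * d) := by rw [one_mul]
      _ = ee (1 * d) * ee (-1 * d) := by rw [h3]
      _ = 1 := h4
  -- the key spectral identity
  have hkey : ∀ l : ZMod n,
      ∑ r ∈ Finset.range p, lam (l + (r : ZMod n) * (m : ZMod n)) = 0 := by
    intro l
    simp only [hlamdef]
    rw [Finset.sum_comm]
    refine Finset.sum_eq_zero fun s hs => ?_
    have hx1 : ee ((m : ZMod n) * s) ≠ 1 := by
      intro h
      have h0' : ((m : ZMod n) * s) = 0 := ee_eq_one _ h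
      have h0'' : ((m * s.val : ℕ) : ZMod n) = 0 := by
        rw [Nat.cast_mul, ZMod.natCast_zmod_val]; exact h0'
      rw [ZMod.natCast_eq_zero_iff] at h0''
      exact hps s hs ((Nat.mul_dvd_mul_iff_left hm).mp (by rw [← hn]; exact h0''))
    have hxp : ee ((m : ZMod n) * s) ^ p = 1 := by
      rw [← ee_nat p]
      have hc : (p : ZMod n) * ((m : ZMod n) * s) = ((p * m : ℕ) : ZMod n) * s := by
        push_cast; ring
      have hpm : ((p * m : ℕ) : ZMod n) = 0 := by
        rw [mul_comm p m, ← hn]; exact ZMod.natCast_self n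
      rw [hc, hpm, zero_mul, ee_zero]
    have hterm : ∀ r ∈ Finset.range p,
        ee ((l + (r : ZMod n) * (m : ZMod n)) * s)
          = ee (l * s) * (ee ((m : ZMod n) * s)) ^ r := by
      intro r _
      rw [← ee_nat, ← ee_add]
      congr 1
      ring
    rw [Finset.sum_congr rfl hterm, ← Finset.mul_sum, geom_sum_eq hx1, hxp, sub_self,
      zero_div, mul_zero]
  -- the product over the relation tends to (ee d)^p but is constantly 1
  have hprod1 : Tendsto (fun k : ℕ => ∏ r ∈ Finset.range p,
      (Complex.exp ((-(t k : ℂ) * Complex.I) * lam (1 + (r : ZMod n) * (m : ZMod n))) /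
       Complex.exp ((-(t k : ℂ) * Complex.I) * lam ((r : ZMod n) * (m : ZMod n))))) atTop
      (nhds (∏ _r ∈ Finset.range p, ee d)) := by
    apply tendsto_finset_prod
    intro r _
    have hne : γ * ee (((r : ZMod n) * (m : ZMod n)) * d) ≠ 0 := mul_ne_zero hγ0 (ee_ne _)
    have hdiv := (hF (1 + (r : ZMod n) * (m : ZMod n))).div (hF ((r : ZMod n) * (m : ZMod n))) hne
    have hval : γ * ee ((1 + (r : ZMod n) * (m : ZMod n)) * d) /
        (γ * ee (((r : ZMod n) * (m : ZMod n)) * d)) = ee d := by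
      rw [div_eq_iff hne]
      have hsplit : (1 + (r : ZMod n) * (m : ZMod n)) * d
          = d + ((r : ZMod n) * (m : ZMod n)) * d := by ring
      rw [hsplit, ee_add]
      ring
    rw [hval] at hdiv
    exact hdiv
  have hprodconst : (fun k : ℕ => ∏ r ∈ Finset.range p,
      (Complex.exp ((-(t k : ℂ) * Complex.I) * lam (1 + (r : ZMod n) * (m : ZMod n))) /
       Complex.exp ((-(t k : ℂ) * Complex.I) * lam ((r : ZMod n) * (m : ZMod n)))))
      = fun _ => (1 : ℂ) := by
    funext k
    rw [Finset.prod_congr rfl (fun r _ => (Complex.exp_sub _ _).symm), ← Complex.exp_sum]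
    have hsum : ∑ r ∈ Finset.range p,
        ((-(t k : ℂ) * Complex.I) * lam (1 + (r : ZMod n) * (m : ZMod n))
          - (-(t k : ℂ) * Complex.I) * lam ((r : ZMod n) * (m : ZMod n)))
        = (-(t k : ℂ) * Complex.I) *
          ((∑ r ∈ Finset.range p, lam (1 + (r : ZMod n) * (m : ZMod n)))
            - ∑ r ∈ Finset.range p, lam ((r : ZMod n) * (m : ZMod n))) := by
      rw [Finset.sum_sub_distrib, mul_sub, Finset.mul_sum, Finset.mul_sum]
    rw [hsum]
    have h1 := hkey 1
    have h0' := hkey 0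
    simp only [zero_add] at h0'
    rw [h1, h0', sub_zero, mul_zero, Complex.exp_zero]
  rw [hprodconst] at hprod1
  have hpfinal : ee d ^ p = 1 := by
    have huniq := tendsto_nhds_unique tendsto_const_nhds hprod1
    rw [Finset.prod_const, Finset.card_range] at huniq
    exact huniq.symm
  obtain ⟨q, hq⟩ := hodd
  have hee1 : ee d = 1 := by
    have hstep : ee d ^ p = ee d := by
      rw [hq, pow_succ, pow_mul, show ee d ^ 2 = 1 by rw [sq]; exact hE, one_pow, one_mul]
    rw [hpfinal] at hstep
    exact hstep.symm
  have hd0 : d = 0 := ee_eq_one d hee1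
  rw [hd] at hd0
  exact huv (sub_eq_zero.mp hd0).symm
end
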